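/- Suppose a directed RTAS (T, σ_L) uniquely self-assembles the k-colored rectangular pattern P : [w]×[h] → [k], and let x₀, y₀, w′, h′ satisfy x₀ + w′ ≤ w and y₀ + h′ ≤ h with w′, h′ ≥ 1. Then there exists an L-shaped seed σ′ of width w′ and height h′ such that the directed RTAS (T, σ′) uniquely self-assembles the subpattern P′ : [w′]×[h′] → [k] defined by P′(x,y) = P(x₀ + x, y₀ + y). In particular, a tile set that uniquely self-assembles a pattern also uniquely self-assembles (with a suitable seed) every rectangular subpattern of it. -/

import Mathlib

/-!  Rectilinear tile assembly systems (RTAS), following the paper's definitions.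
A tile type is a tuple of four glues (north, west, south, east) and a colour;
glues and colours are natural numbers.  An assembly is a partial function from
`ℤ²` to tile types (modelled with `Option`). -/

structure Tile where
  north : ℕ
  west : ℕ
  south : ℕ
  east : ℕ
  color : ℕ
deriving DecidableEq, Repr

/-- An assembly: a partial function from positions to tile types. -/
abbrev Assembly := ℤ × ℤ → Option Tile

/-- A tile set is directed if no two distinct tile types have both equal west
glues and equal south glues. -/
def DirectedTS (T : Finset Tile) : Prop :=
  ∀ t₁ ∈ T, ∀ t₂ ∈ T, t₁.west = t₂.west → t₁.south = t₂.south → t₁ = t₂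

/-- `t` may attach to `α` at `(x, y)`: the position is untiled, the positions to
the west and to the south are tiled, and the west/south glues of `t` match the
east glue of the western neighbour and the north glue of the southern one. -/
def CanAttach (T : Finset Tile) (α : Assembly) (t : Tile) (x y : ℤ) : Prop :=
  t ∈ T ∧ α (x, y) = none ∧
    (∃ tw, α (x - 1, y) = some tw ∧ t.west = tw.east) ∧
    (∃ ts, α (x, y - 1) = some ts ∧ t.south = ts.north)

/-- The assembly obtained from `α` by placing `t` at `(x, y)`. -/
def Attach (α : Assembly) (t : Tile) (x y : ℤ) : Assembly :=
  fun p => if p = (x, y) then some t else α p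

/-- One attachment step `α →₁ β`. -/
def Step (T : Finset Tile) (α β : Assembly) : Prop :=
  ∃ t x y, CanAttach T α t x y ∧ β = Attach α t x y

/-- A rectilinear tile assembly system: a finite tile set together with an
L-shaped seed of width `w` and height `h`, whose tiles do not belong to the
tile set. -/
structure RTAS where
  T : Finset Tile
  w : ℕ
  h : ℕ
  seed : Assembly
  seed_dom : ∀ p : ℤ × ℤ, (seed p).isSome ↔
      (p = (-1, -1) ∨ (0 ≤ p.1 ∧ p.1 < (w : ℤ) ∧ p.2 = -1) ∨
        (p.1 = -1 ∧ 0 ≤ p.2 ∧ p.2 < (h : ℤ)))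
  seed_disjoint : ∀ p t, seed p = some t → t ∉ T

/-- The set of producible assemblies: the least set containing the seed and
closed under single attachments. -/
inductive Producible (S : RTAS) : Assembly → Prop
  | seed : Producible S S.seed
  | step {α β : Assembly} : Producible S α → Step S.T α β → Producible S β

/-- A terminal assembly: producible, and no tile of the tile set can attach. -/
def Terminal (S : RTAS) (γ : Assembly) : Prop :=
  Producible S γ ∧ ∀ β : Assembly, ¬ Step S.T γ β

/-- `S` uniquely self-assembles the `W × H` rectangular colour pattern `pat`:
some terminal assembly of `S` covers exactly `[W] × [H]` on `ℕ²`, and the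
colour of the tile at each of those positions is the colour prescribed by
`pat`.  (For a directed RTAS the terminal assembly is unique.) -/
def UniquelySelfAssembles (S : RTAS) (W H : ℕ) (pat : ℕ → ℕ → ℕ) : Prop :=
  ∃ γ : Assembly, Terminal S γ ∧
    (∀ x y : ℕ, (γ ((x : ℤ), (y : ℤ))).isSome ↔ (x < W ∧ y < H)) ∧
    (∀ x y : ℕ, ∀ t : Tile, γ ((x : ℤ), (y : ℤ)) = some t → t.color = pat x y)


/-- Key invariant of producible assemblies. -/
theorem producible_invariant (S : RTAS) {γ : Assembly} (h : Producible S γ) :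
    (∀ p : ℤ × ℤ, (p.1 < 0 ∨ p.2 < 0) → γ p = S.seed p) ∧
    (∀ p : ℤ × ℤ, 0 ≤ p.1 → 0 ≤ p.2 → ∀ t, γ p = some t → t ∈ S.T ∧
      ∃ tw ts, γ (p.1 - 1, p.2) = some tw ∧ γ (p.1, p.2 - 1) = some ts ∧
        t.west = tw.east ∧ t.south = ts.north) := by
  induction h with
  | seed =>
    refine ⟨fun p _ => rfl, fun p hp1 hp2 t ht => ?_⟩
    have := (S.seed_dom p).mp (by simp [ht])
    exfalso
    rcases this with h1 | h2 | h3
    · rw [Prod.ext_iff] at h1; omega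
    · omega
    · omega
  | @step α β hα hstep ih =>
    obtain ⟨ih1, ih2⟩ := ih
    obtain ⟨t, x, y, ⟨htT, hnone, ⟨tw, htw, hwg⟩, ⟨ts, hts, hsg⟩⟩, rfl⟩ := hstep
    have hx : 0 ≤ x := by
      by_contra hx
      push_neg at hx
      have h1 : α (x - 1, y) = S.seed (x - 1, y) := ih1 _ (by left; simpa using by omega)
      rw [h1] at htw
      have := (S.seed_dom (x - 1, y)).mp (by simp [htw])
      rcases this with h1 | h2 | h3
      · rw [Prod.ext_iff] at h1; simp at h1; omega
      · simp at h2; omega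
      · simp at h3; omega
    have hy : 0 ≤ y := by
      by_contra hy
      push_neg at hy
      have h1 : α (x, y - 1) = S.seed (x, y - 1) := ih1 _ (by right; simpa using by omega)
      rw [h1] at hts
      have := (S.seed_dom (x, y - 1)).mp (by simp [hts])
      rcases this with h1 | h2 | h3
      · rw [Prod.ext_iff] at h1; simp at h1; omega
      · simp at h2; omega
      · simp at h3; omega
    constructor
    · intro p hp
      have hne : p ≠ (x, y) := by
        rintro rfl; rcases hp with hp | hp <;> omega
      simp only [Attach, if_neg hne]
      exact ih1 p hp
    · intro p hp1 hp2 t' ht'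
      by_cases hpe : p = (x, y)
      · subst hpe
        simp only [Attach, if_pos rfl] at ht'
        cases ht'
        refine ⟨htT, tw, ts, ?_, ?_, hwg, hsg⟩
        · simp only [Attach]
          rw [if_neg (by intro h; rw [Prod.ext_iff] at h; simp at h), htw]
        · simp only [Attach]
          rw [if_neg (by intro h; rw [Prod.ext_iff] at h; simp at h), hts]
      · simp only [Attach, if_neg hpe] at ht'
        obtain ⟨hT', tw', ts', htw', hts', hg1, hg2⟩ := ih2 p hp1 hp2 t' ht'
        refine ⟨hT', tw', ts', ?_, ?_, hg1, hg2⟩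
        · simp only [Attach]
          rw [if_neg (fun h => by rw [h, hnone] at htw'; cases htw'), htw']
        · simp only [Attach]
          rw [if_neg (fun h => by rw [h, hnone] at hts'; cases hts'), hts']

/-- The L-shaped seed for the subpattern: bottom-row tiles carry as north glue
the north glue of the tile of `γ` just below the sub-rectangle, and left-column
tiles carry as east glue the east glue of the tile of `γ` just left of it.
All seed tiles have the fresh colour `C`. -/
def mkSeed (g : ℤ × ℤ → Tile) (x₀ y₀ w' h' C : ℕ) : Assembly := fun p =>
  if p.2 = -1 ∧ -1 ≤ p.1 ∧ p.1 < (w' : ℤ) then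
    some ⟨(g ((x₀ : ℤ) + p.1, (y₀ : ℤ) - 1)).north, 0, 0, 0, C⟩
  else if p.1 = -1 ∧ 0 ≤ p.2 ∧ p.2 < (h' : ℤ) then
    some ⟨0, 0, 0, (g ((x₀ : ℤ) - 1, (y₀ : ℤ) + p.2)).east, C⟩
  else none

theorem mkSeed_dom (g : ℤ × ℤ → Tile) (x₀ y₀ w' h' C : ℕ) (p : ℤ × ℤ) :
    ((mkSeed g x₀ y₀ w' h' C) p).isSome ↔
      (p = (-1, -1) ∨ (0 ≤ p.1 ∧ p.1 < (w' : ℤ) ∧ p.2 = -1) ∨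
        (p.1 = -1 ∧ 0 ≤ p.2 ∧ p.2 < (h' : ℤ))) := by
  unfold mkSeed
  split_ifs with h1 h2 <;> simp [Prod.ext_iff] <;> omega

theorem mkSeed_color (g : ℤ × ℤ → Tile) (x₀ y₀ w' h' C : ℕ) (p : ℤ × ℤ) (t : Tile)
    (h : mkSeed g x₀ y₀ w' h' C p = some t) : t.color = C := by
  unfold mkSeed at h
  split_ifs at h <;> cases h <;> rfl

/-- Partial fills of the sub-rectangle: rows below `j` completely tiled, row `j`
tiled up to (excluding) column `i`; elsewhere, the seed `σ`. -/
def Fill (γ σ : Assembly) (x₀ y₀ : ℕ) (w' : ℕ) (j i : ℤ) : Assembly := fun p =>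
  if 0 ≤ p.1 ∧ 0 ≤ p.2 ∧ (p.2 < j ∧ p.1 < (w' : ℤ) ∨ p.2 = j ∧ p.1 < i) then
    γ ((x₀ : ℤ) + p.1, (y₀ : ℤ) + p.2)
  else σ p

theorem Fill_apply (γ σ : Assembly) (x₀ y₀ w' : ℕ) (j i x y : ℤ) :
    Fill γ σ x₀ y₀ w' j i (x, y) =
      if 0 ≤ x ∧ 0 ≤ y ∧ (y < j ∧ x < (w' : ℤ) ∨ y = j ∧ x < i) then
        γ ((x₀ : ℤ) + x, (y₀ : ℤ) + y)
      else σ (x, y) := rfl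

theorem mkSeed_apply (g : ℤ × ℤ → Tile) (x₀ y₀ w' h' C : ℕ) (x y : ℤ) :
    mkSeed g x₀ y₀ w' h' C (x, y) =
      if y = -1 ∧ -1 ≤ x ∧ x < (w' : ℤ) then
        some ⟨(g ((x₀ : ℤ) + x, (y₀ : ℤ) - 1)).north, 0, 0, 0, C⟩
      else if x = -1 ∧ 0 ≤ y ∧ y < (h' : ℤ) then
        some ⟨0, 0, 0, (g ((x₀ : ℤ) - 1, (y₀ : ℤ) + y)).east, C⟩
      else none := rfl

/-- If a directed RTAS uniquely self-assembles the
`k`-coloured rectangular pattern `P` of width `w` and height `h`, then for any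
rectangle `[x₀, x₀ + w') × [y₀, y₀ + h')` inside `[w] × [h]` (with
`w', h' ≥ 1`) there is an L-shaped seed such that the same tile set uniquely
self-assembles the corresponding subpattern of `P`. -/
theorem subpattern_selfassembly (S : RTAS) (hdir : DirectedTS S.T)
    (k : ℕ) (P : ℕ → ℕ → ℕ)
    (hPk : ∀ x y : ℕ, x < S.w → y < S.h → P x y < k)
    (hP : UniquelySelfAssembles S S.w S.h P)
    (x₀ y₀ w' h' : ℕ) (hw1 : 1 ≤ w') (hh1 : 1 ≤ h')
    (hw : x₀ + w' ≤ S.w) (hh : y₀ + h' ≤ S.h) :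
    ∃ S' : RTAS, S'.T = S.T ∧ S'.w = w' ∧ S'.h = h' ∧
      UniquelySelfAssembles S' w' h' (fun x y => P (x₀ + x) (y₀ + y)) := by
  obtain ⟨γ, ⟨hprod, hterm⟩, hdom, hcol⟩ := hP
  obtain ⟨hout, hcons⟩ := producible_invariant S hprod
  set g : ℤ × ℤ → Tile := fun p => (γ p).getD ⟨0, 0, 0, 0, 0⟩ with hgdef
  -- γ is tiled exactly on the rectangle [-1, w) × [-1, h)
  have hγdom : ∀ p : ℤ × ℤ, (γ p).isSome ↔
      (-1 ≤ p.1 ∧ p.1 < (S.w : ℤ) ∧ -1 ≤ p.2 ∧ p.2 < (S.h : ℤ)) := by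
    intro p
    by_cases hp : 0 ≤ p.1 ∧ 0 ≤ p.2
    · obtain ⟨h1, h2⟩ := hp
      have hpe : ((p.1.toNat : ℤ), (p.2.toNat : ℤ)) = p := by
        rw [Prod.ext_iff]; constructor <;> simp <;> omega
      have hs := hdom p.1.toNat p.2.toNat
      rw [hpe] at hs
      rw [hs]
      omega
    · rw [hout p (by omega), S.seed_dom, Prod.ext_iff]
      push_neg at hp
      omega
  have hγget : ∀ p : ℤ × ℤ, (γ p).isSome → γ p = some (g p) := by
    intro p h
    cases hh' : γ p with
    | none => rw [hh'] at h; simp at h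
    | some t => simp [hgdef, hh']
  -- glue consistency of γ in the interior
  have hγcons : ∀ a b : ℤ, 0 ≤ a → 0 ≤ b → a < (S.w : ℤ) → b < (S.h : ℤ) →
      γ (a, b) = some (g (a, b)) ∧ g (a, b) ∈ S.T ∧
      (g (a, b)).west = (g (a - 1, b)).east ∧
      (g (a, b)).south = (g (a, b - 1)).north := by
    intro a b ha hb haw hbh
    have hsome : (γ (a, b)).isSome := (hγdom (a, b)).mpr (by simp; omega)
    have heq := hγget _ hsome
    obtain ⟨hT, tw, ts, htw, hts, e1, e2⟩ := hcons (a, b) ha hb _ heq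
    simp only at htw hts
    have htw' : g (a - 1, b) = tw := by simp [hgdef, htw]
    have hts' : g (a, b - 1) = ts := by simp [hgdef, hts]
    exact ⟨heq, hT, by rw [htw']; exact e1, by rw [hts']; exact e2⟩
  -- a fresh colour
  set C : ℕ := S.T.sup Tile.color + 1 with hCdef
  have hC : ∀ t ∈ S.T, t.color ≠ C := by
    intro t ht
    have := Finset.le_sup (f := Tile.color) ht
    omega
  set σ : Assembly := mkSeed g x₀ y₀ w' h' C with hσdef
  have hσnone : ∀ x y : ℤ, 0 ≤ x → 0 ≤ y → σ (x, y) = none := by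
    intro x y h1 h2
    rw [hσdef, mkSeed_apply, if_neg (by omega), if_neg (by omega)]
  have hdisj : ∀ p t, σ p = some t → t ∉ S.T :=
    fun p t hpt ht => hC t ht (mkSeed_color g x₀ y₀ w' h' C p t hpt)
  set S' : RTAS := ⟨S.T, w', h', σ, mkSeed_dom g x₀ y₀ w' h' C, hdisj⟩ with hS'def
  refine ⟨S', rfl, rfl, rfl, ?_⟩
  -- single attachment steps
  have hstep : ∀ j i : ℕ, j < h' → i < w' →
      Step S.T (Fill γ σ x₀ y₀ w' j i) (Fill γ σ x₀ y₀ w' j (i + 1)) := by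
    intro j i hj hi
    obtain ⟨heq, hT, hwest, hsouth⟩ := hγcons ((x₀ : ℤ) + i) ((y₀ : ℤ) + j)
      (by omega) (by omega) (by omega) (by omega)
    refine ⟨g ((x₀ : ℤ) + i, (y₀ : ℤ) + j), (i : ℤ), (j : ℤ), ⟨hT, ?_, ?_, ?_⟩, ?_⟩
    · rw [Fill_apply, if_neg (by omega)]
      exact hσnone _ _ (by omega) (by omega)
    · -- west neighbour
      by_cases hi0 : i = 0
      · subst hi0
        rw [Fill_apply, if_neg (by omega), hσdef, mkSeed_apply,
          if_neg (by omega), if_pos (by omega)]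
        refine ⟨_, rfl, ?_⟩
        have hca : (x₀ : ℤ) + (0 : ℕ) - 1 = (x₀ : ℤ) - 1 := by push_cast; ring
        rw [hca] at hwest
        exact hwest
      · rw [Fill_apply, if_pos (by omega)]
        have hsome : (γ ((x₀ : ℤ) + ((i : ℤ) - 1), (y₀ : ℤ) + j)).isSome :=
          (hγdom _).mpr (by simp; omega)
        refine ⟨_, hγget _ hsome, ?_⟩
        have hca : (x₀ : ℤ) + (i : ℤ) - 1 = (x₀ : ℤ) + ((i : ℤ) - 1) := by ring
        rw [hca] at hwest
        exact hwest
    · -- south neighbour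
      by_cases hj0 : j = 0
      · subst hj0
        rw [Fill_apply, if_neg (by omega), hσdef, mkSeed_apply, if_pos (by omega)]
        refine ⟨_, rfl, ?_⟩
        have hca : (y₀ : ℤ) + (0 : ℕ) - 1 = (y₀ : ℤ) - 1 := by push_cast; ring
        rw [hca] at hsouth
        exact hsouth
      · rw [Fill_apply, if_pos (by omega)]
        have hsome : (γ ((x₀ : ℤ) + i, (y₀ : ℤ) + ((j : ℤ) - 1))).isSome :=
          (hγdom _).mpr (by simp; omega)
        refine ⟨_, hγget _ hsome, ?_⟩
        have hca : (y₀ : ℤ) + (j : ℤ) - 1 = (y₀ : ℤ) + ((j : ℤ) - 1) := by ring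
        rw [hca] at hsouth
        exact hsouth
    · -- the result of the attachment
      funext p
      obtain ⟨x, y⟩ := p
      rw [Fill_apply]
      unfold Attach
      by_cases hp : (x, y) = ((i : ℤ), (j : ℤ))
      · rw [if_pos hp]
        rw [Prod.ext_iff] at hp
        obtain ⟨hp1, hp2⟩ := hp
        simp only at hp1 hp2
        subst hp1; subst hp2
        rw [if_pos (by push_cast; omega)]
        exact heq
      · rw [if_neg hp, Fill_apply]
        rw [Prod.ext_iff] at hp
        simp only at hp
        by_cases hc : 0 ≤ x ∧ 0 ≤ y ∧ (y < (j : ℤ) ∧ x < (w' : ℤ) ∨ y = (j : ℤ) ∧ x < (i : ℤ))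
        · rw [if_pos (by push_cast; omega), if_pos hc]
        · rw [if_neg (by push_cast; omega), if_neg hc]
  -- row wrap: a fully tiled row equals the start of the next row
  have hwrap : ∀ j : ℕ,
      Fill γ σ x₀ y₀ w' j w' = Fill γ σ x₀ y₀ w' ((j : ℤ) + 1) 0 := by
    intro j
    funext p
    obtain ⟨x, y⟩ := p
    rw [Fill_apply, Fill_apply]
    by_cases hc : 0 ≤ x ∧ 0 ≤ y ∧ (y < (j : ℤ) ∧ x < (w' : ℤ) ∨ y = (j : ℤ) ∧ x < (w' : ℤ))
    · rw [if_pos hc, if_pos (by omega)]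
    · rw [if_neg hc, if_neg (by omega)]
  -- base of the induction
  have hfill0 : Fill γ σ x₀ y₀ w' 0 0 = σ := by
    funext p
    obtain ⟨x, y⟩ := p
    rw [Fill_apply, if_neg (by omega)]
  -- filling one row
  have hrow : ∀ j : ℕ, j < h' → ∀ i : ℕ, i ≤ w' →
      Producible S' (Fill γ σ x₀ y₀ w' j 0) → Producible S' (Fill γ σ x₀ y₀ w' j i) := by
    intro j hj i
    induction i with
    | zero => exact fun _ h => h
    | succ n ihn =>
      intro hle hp
      have h1 : Producible S' (Fill γ σ x₀ y₀ w' j n) := ihn (by omega) hp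
      have h2 := hstep j n hj (by omega)
      have hc : ((n : ℤ) + 1) = ((n + 1 : ℕ) : ℤ) := by push_cast; ring
      rw [hc] at h2
      exact Producible.step h1 h2
  -- filling all rows
  have hrows : ∀ j : ℕ, j ≤ h' → Producible S' (Fill γ σ x₀ y₀ w' j 0) := by
    intro j
    induction j with
    | zero =>
      intro _
      rw [show ((0 : ℕ) : ℤ) = (0 : ℤ) from rfl, hfill0]
      exact Producible.seed
    | succ n ihn =>
      intro hle
      have h1 := hrow n (by omega) w' le_rfl (ihn (by omega))
      rw [hwrap n] at h1
      have hc : ((n : ℤ) + 1) = ((n + 1 : ℕ) : ℤ) := by push_cast; ring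
      rw [hc] at h1
      exact h1
  -- the terminal assembly of S'
  set γ' : Assembly := Fill γ σ x₀ y₀ w' h' 0 with hγ'def
  have hγ'prod : Producible S' γ' := hrows h' le_rfl
  have hγ'dom : ∀ p : ℤ × ℤ, (γ' p).isSome ↔
      (-1 ≤ p.1 ∧ p.1 < (w' : ℤ) ∧ -1 ≤ p.2 ∧ p.2 < (h' : ℤ)) := by
    intro p
    obtain ⟨x, y⟩ := p
    rw [hγ'def, Fill_apply]
    by_cases hc : 0 ≤ x ∧ 0 ≤ y ∧ (y < (h' : ℤ) ∧ x < (w' : ℤ) ∨ y = (h' : ℤ) ∧ x < (0 : ℤ))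
    · rw [if_pos hc, hγdom]
      simp only
      omega
    · rw [if_neg hc, hσdef, mkSeed_dom, Prod.ext_iff]
      simp only
      omega
  have hγ'term : ∀ β : Assembly, ¬ Step S'.T γ' β := by
    rintro β ⟨t, x, y, ⟨_, h0, ⟨tw, hw2, _⟩, ⟨ts, hs2, _⟩⟩, _⟩
    have d1 := (hγ'dom (x - 1, y)).mp (by simp [hw2])
    have d2 := (hγ'dom (x, y - 1)).mp (by simp [hs2])
    simp only at d1 d2
    have d0 : (γ' (x, y)).isSome := (hγ'dom (x, y)).mpr (by simp; omega)
    rw [h0] at d0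
    simp at d0
  refine ⟨γ', ⟨hγ'prod, hγ'term⟩, ?_, ?_⟩
  · intro x y
    rw [hγ'dom ((x : ℤ), (y : ℤ))]
    simp only
    omega
  · intro x y t ht
    have hx : x < w' ∧ y < h' := by
      have := (hγ'dom ((x : ℤ), (y : ℤ))).mp (by simp [ht])
      simp only at this
      omega
    rw [hγ'def, Fill_apply, if_pos (by omega)] at ht
    have hc1 : ((x₀ : ℤ) + (x : ℤ)) = ((x₀ + x : ℕ) : ℤ) := by push_cast; ring
    have hc2 : ((y₀ : ℤ) + (y : ℤ)) = ((y₀ + y : ℕ) : ℤ) := by push_cast; ring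
    rw [hc1, hc2] at ht
    exact hcol (x₀ + x) (y₀ + y) t ht
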